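/- Let c₁, c₂ > 0 and ε > 0 be real numbers, let m ≥ 1 be an integer, and let z ∈ ℂ with |z| = 1. Set a = exp(−2c₁/ε), b = exp(−2c₂/ε), and t = √((1 − a)(1 − b)). Then z^m ≠ t and a·b/|z^m − t|² ≤ 4·exp(−2|c₁ − c₂|/ε). -/

import Mathlib

private lemma stmt9_aux (a b E t : ℝ) (ha0 : 0 < a) (hE0 : 0 ≤ E)
    (hEa : E * a = b) (h2t : a ≤ 2 * (1 - t)) (ht0 : 0 ≤ t) (ht1 : t ≤ 1) :
    a * b ≤ 4 * E * (1 - t) ^ 2 := by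
  nlinarith [mul_nonneg hE0 (mul_nonneg (by linarith : (0:ℝ) ≤ 2 * (1 - t) - a)
    (by linarith : (0:ℝ) ≤ 2 * (1 - t) + a))]

/-- For the asymmetric double barrier with `a = e^{-2c₁/ε}`, `b = e^{-2c₂/ε}` and
`t = √((1-a)(1-b))`: for `|z| = 1` one has `z^m ≠ t` and the transmission probability
`a·b/|z^m - t|²` is bounded by `4·e^{-2|c₁-c₂|/ε}`. -/
theorem stmt9 (c₁ c₂ ε : ℝ) (hc₁ : 0 < c₁) (hc₂ : 0 < c₂) (hε : 0 < ε)
    (m : ℕ) (hm : 1 ≤ m) (z : ℂ) (hz : ‖z‖ = 1) :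
    z ^ m ≠ ((Real.sqrt ((1 - Real.exp (-2 * c₁ / ε)) * (1 - Real.exp (-2 * c₂ / ε))) : ℝ) : ℂ)
      ∧ Real.exp (-2 * c₁ / ε) * Real.exp (-2 * c₂ / ε) /
            ‖(z ^ m -
              ((Real.sqrt ((1 - Real.exp (-2 * c₁ / ε)) * (1 - Real.exp (-2 * c₂ / ε))) : ℝ) : ℂ))‖ ^ 2
          ≤ 4 * Real.exp (-2 * |c₁ - c₂| / ε) := by
  set a := Real.exp (-2 * c₁ / ε) with ha
  set b := Real.exp (-2 * c₂ / ε) with hb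
  set E := Real.exp (-2 * |c₁ - c₂| / ε) with hE
  have ha0 : 0 < a := Real.exp_pos _
  have hb0 : 0 < b := Real.exp_pos _
  have hE0 : 0 < E := Real.exp_pos _
  have ha1 : a < 1 := by
    rw [ha]
    apply Real.exp_lt_one_iff.mpr
    apply div_neg_of_neg_of_pos (by linarith) hε
  have hb1 : b < 1 := by
    rw [hb]
    apply Real.exp_lt_one_iff.mpr
    apply div_neg_of_neg_of_pos (by linarith) hε
  set t := Real.sqrt ((1 - a) * (1 - b)) with htdef
  have ht0 : 0 ≤ t := Real.sqrt_nonneg _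
  have htsq : t ^ 2 = (1 - a) * (1 - b) := Real.sq_sqrt (by nlinarith)
  have ht1 : t < 1 := by nlinarith
  have h1 : ‖z ^ m‖ = 1 := by rw [norm_pow, hz, one_pow]
  have h2 : ‖((t : ℝ) : ℂ)‖ = t := by
    rw [Complex.norm_real, Real.norm_eq_abs, abs_of_nonneg ht0]
  have habs : 1 - t ≤ ‖z ^ m - (t : ℂ)‖ := by
    have := norm_sub_norm_le (z ^ m) ((t : ℝ) : ℂ)
    rw [h1, h2] at this
    exact this
  have hne : z ^ m ≠ ((t : ℝ) : ℂ) := by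
    intro h
    rw [h, h2] at h1
    linarith
  refine ⟨hne, ?_⟩
  -- key bounds on 1 - t
  have h2ta : a ≤ 2 * (1 - t) := by nlinarith [sq_nonneg (1 - t)]
  have h2tb : b ≤ 2 * (1 - t) := by nlinarith [sq_nonneg (1 - t)]
  have hkey : a * b ≤ 4 * E * (1 - t) ^ 2 := by
    rcases le_total c₁ c₂ with h | h
    · have hEa : E * a = b := by
        rw [hE, ha, hb, ← Real.exp_add]
        congr 1
        rw [abs_of_nonpos (by linarith)]
        field_simp
        ring
      exact stmt9_aux a b E t ha0 hE0.le hEa h2ta ht0 ht1.le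
    · have hEb : E * b = a := by
        rw [hE, ha, hb, ← Real.exp_add]
        congr 1
        rw [abs_of_nonneg (by linarith)]
        field_simp
        ring
      have := stmt9_aux b a E t hb0 hE0.le hEb h2tb ht0 ht1.le
      linarith [this]
  have habspos : 0 < ‖z ^ m - (t : ℂ)‖ := by linarith
  have habs2 : (1 - t) ^ 2 ≤ ‖z ^ m - (t : ℂ)‖ ^ 2 :=
    pow_le_pow_left₀ (by linarith) habs 2
  rw [div_le_iff₀ (by positivity)]
  calc a * b ≤ 4 * E * (1 - t) ^ 2 := hkey
    _ ≤ 4 * E * ‖z ^ m - (t : ℂ)‖ ^ 2 := by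
        exact mul_le_mul_of_nonneg_left habs2 (by positivity)
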